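/- Let L ≥ 1 and N ≥ 1 be integers, let q : {1,…,N} → [0,1] satisfy ∑_{n=1}^N q(n) = 1, and let r : {1,…,N} → {0,1,…,L}. For j ∈ {0,…,L−1} set α_j = ∑_{n : r(n) = j} q(n). Then ∑_{y ∈ {1,…,N}^L} (∏_{ℓ=1}^{L} q(y_ℓ)) · ∑_{∅ ≠ S ⊆ {1,…,L}} (1/binom(L, |S|−1)) · (1 − ∏_{ℓ ∈ S} 𝟙{ r(y_ℓ) ≠ |S| − 1 }) = ∑_{j=0}^{L−1} ((L−j)/(j+1)) · (1 − (1 − α_j)^{j+1}). -/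

import Mathlib

/-- The average update rate identity for the centralized scheme in the static
request single-block-encoding FSN (second part of Theorem 8, Appendix B):
averaging the per-request update rate
`∑_{∅≠S⊆[L]} (1 - ∏_{ℓ∈S} 𝟙{r(y_ℓ) ≠ |S|-1}) / C(L,|S|-1)` over i.i.d.
requests `y` with popularity `q` gives
`∑_{j=0}^{L-1} ((L-j)/(j+1)) (1 - (1 - α_j)^{j+1})`,
where `α_j = ∑_{n : r n = j} q n`. -/
theorem stmt_15 (L N : ℕ) (hL : 1 ≤ L) (hN : 1 ≤ N)
    (q : Fin N → ℝ) (hq0 : ∀ n, 0 ≤ q n) (hq1 : ∀ n, q n ≤ 1)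
    (hqsum : ∑ n, q n = 1)
    (r : Fin N → ℕ) (hr : ∀ n, r n ≤ L) :
    ∑ y : Fin L → Fin N, (∏ ℓ, q (y ℓ)) *
        ∑ S ∈ Finset.univ.powerset.filter (fun S : Finset (Fin L) => S.Nonempty),
          (1 / (L.choose (S.card - 1) : ℝ)) *
            (1 - ∏ ℓ ∈ S, (if r (y ℓ) ≠ S.card - 1 then (1 : ℝ) else 0))
      = ∑ j ∈ Finset.range L,
          (((L : ℝ) - (j : ℝ)) / ((j : ℝ) + 1)) *
            (1 - (1 - ∑ n, (if r n = j then q n else 0)) ^ (j + 1)) := by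
  classical
  set A : Finset (Finset (Fin L)) :=
    Finset.univ.powerset.filter (fun S : Finset (Fin L) => S.Nonempty) with hA
  set α : ℕ → ℝ := fun j => ∑ n, (if r n = j then q n else 0) with hα
  have prodsum : ∀ h : Fin L → Fin N → ℝ,
      (∑ y : Fin L → Fin N, ∏ ℓ, h ℓ (y ℓ)) = ∏ ℓ, ∑ n, h ℓ n := by
    intro h
    rw [Finset.prod_univ_sum, Fintype.piFinset_univ]
  have lemA : ∀ (g : Fin N → ℝ) (S : Finset (Fin L)),
      (∑ y : Fin L → Fin N, (∏ ℓ, q (y ℓ)) * ∏ ℓ ∈ S, g (y ℓ))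
        = (∑ n, q n * g n) ^ S.card := by
    intro g S
    have e1 : ∀ y : Fin L → Fin N,
        (∏ ℓ, q (y ℓ)) * ∏ ℓ ∈ S, g (y ℓ)
          = ∏ ℓ, (q (y ℓ) * (if ℓ ∈ S then g (y ℓ) else 1)) := by
      intro y
      rw [Finset.prod_mul_distrib]
      congr 1
      rw [Finset.prod_ite_mem, Finset.univ_inter]
    simp_rw [e1]
    rw [prodsum (fun ℓ n => q n * (if ℓ ∈ S then g n else 1))]
    have e2 : ∀ ℓ : Fin L, (∑ n, q n * (if ℓ ∈ S then g n else 1))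
        = (if ℓ ∈ S then (∑ n, q n * g n) else 1) := by
      intro ℓ
      by_cases h : ℓ ∈ S <;> simp [h, hqsum]
    simp_rw [e2]
    rw [Finset.prod_ite_mem, Finset.univ_inter, Finset.prod_const]
  have sum1 : (∑ y : Fin L → Fin N, ∏ ℓ, q (y ℓ)) = 1 := by
    have := lemA (fun _ => (1 : ℝ)) ∅
    simpa [hqsum] using this
  have lemB : ∀ j : ℕ,
      (∑ n, q n * (if r n ≠ j then (1 : ℝ) else 0)) = 1 - α j := by
    intro j
    have : ∀ n : Fin N, q n * (if r n ≠ j then (1 : ℝ) else 0)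
        = q n - (if r n = j then q n else 0) := by
      intro n; by_cases h : r n = j <;> simp [h]
    simp_rw [this]
    rw [Finset.sum_sub_distrib, hqsum, hα]
  -- per subset computation
  have perS : ∀ S : Finset (Fin L),
      (∑ y : Fin L → Fin N, (∏ ℓ, q (y ℓ)) *
          ((1 / (L.choose (S.card - 1) : ℝ)) *
            (1 - ∏ ℓ ∈ S, (if r (y ℓ) ≠ S.card - 1 then (1 : ℝ) else 0))))
        = (1 / (L.choose (S.card - 1) : ℝ)) *
            (1 - (1 - α (S.card - 1)) ^ S.card) := by
    intro S
    have e : ∀ y : Fin L → Fin N,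
        (∏ ℓ, q (y ℓ)) *
            ((1 / (L.choose (S.card - 1) : ℝ)) *
              (1 - ∏ ℓ ∈ S, (if r (y ℓ) ≠ S.card - 1 then (1 : ℝ) else 0)))
          = (1 / (L.choose (S.card - 1) : ℝ)) *
              ((∏ ℓ, q (y ℓ)) -
                (∏ ℓ, q (y ℓ)) * ∏ ℓ ∈ S, (if r (y ℓ) ≠ S.card - 1 then (1 : ℝ) else 0)) := by
      intro y; ring
    simp_rw [e]
    rw [← Finset.mul_sum, Finset.sum_sub_distrib, sum1,
      lemA (fun n => if r n ≠ S.card - 1 then (1 : ℝ) else 0) S, lemB]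
  -- swap order of summation
  have swap : (∑ y : Fin L → Fin N, (∏ ℓ, q (y ℓ)) *
        ∑ S ∈ A,
          (1 / (L.choose (S.card - 1) : ℝ)) *
            (1 - ∏ ℓ ∈ S, (if r (y ℓ) ≠ S.card - 1 then (1 : ℝ) else 0)))
      = ∑ S ∈ A, (1 / (L.choose (S.card - 1) : ℝ)) *
            (1 - (1 - α (S.card - 1)) ^ S.card) := by
    simp_rw [Finset.mul_sum]
    rw [Finset.sum_comm]
    exact Finset.sum_congr rfl fun S _ => perS S
  rw [swap]
  -- group by cardinality
  set F : ℕ → ℝ := fun k =>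
    (1 / (L.choose (k - 1) : ℝ)) * (1 - (1 - α (k - 1)) ^ k) with hF
  have grouped : (∑ S ∈ A, F S.card)
      = ∑ k ∈ Finset.range (L + 1),
          ((A.filter (fun S => S.card = k)).card : ℝ) * F k := by
    rw [← Finset.sum_fiberwise_of_maps_to (g := Finset.card)
      (t := Finset.range (L + 1)) (fun S _ => by
        simpa using Nat.lt_succ_of_le (le_trans (Finset.card_le_univ S) (by simp)))]
    refine Finset.sum_congr rfl fun k _ => ?_
    have hc : ∀ S ∈ A.filter (fun S => S.card = k), F S.card = F k := by
      intro S hS; rw [(Finset.mem_filter.mp hS).2]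
    rw [Finset.sum_congr rfl hc, Finset.sum_const, nsmul_eq_mul]
  have count : ∀ k : ℕ, 1 ≤ k →
      (A.filter (fun S => S.card = k)).card = L.choose k := by
    intro k hk
    have : A.filter (fun S => S.card = k)
        = Finset.univ.powersetCard k := by
      rw [hA, Finset.filter_filter]
      rw [show (Finset.univ.powersetCard k : Finset (Finset (Fin L)))
          = Finset.univ.powerset.filter (fun S => S.card = k) from by
        ext S; simp [Finset.mem_powersetCard, Finset.mem_powerset]]
      refine Finset.filter_congr fun S hS => ?_
      constructor
      · rintro ⟨_, h⟩; exact h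
      · intro h; exact ⟨Finset.card_pos.mp (h ▸ hk), h⟩
    rw [this, Finset.card_powersetCard, Finset.card_univ, Fintype.card_fin]
  have count0 : (A.filter (fun S => S.card = 0)).card = 0 := by
    rw [Finset.card_eq_zero, Finset.filter_eq_empty_iff]
    intro S hS
    rw [hA, Finset.mem_filter] at hS
    exact fun h => hS.2.ne_empty (Finset.card_eq_zero.mp h)
  rw [grouped, Finset.sum_range_succ']
  rw [count0]
  simp only [Nat.cast_zero, zero_mul, add_zero]
  refine Finset.sum_congr rfl fun j hj => ?_
  have hjL : j < L := Finset.mem_range.mp hj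
  rw [count (j + 1) (Nat.le_add_left 1 j)]
  have hFj : F (j + 1) = (1 / (L.choose j : ℝ)) * (1 - (1 - α j) ^ (j + 1)) := by
    rw [hF]; norm_num
  rw [hFj]
  have hch : (L.choose (j + 1) : ℝ) * ((j : ℝ) + 1)
      = (L.choose j : ℝ) * ((L : ℝ) - (j : ℝ)) := by
    have h := Nat.choose_succ_right_eq L j
    have h' : ((L.choose (j + 1) * (j + 1) : ℕ) : ℝ) = ((L.choose j * (L - j) : ℕ) : ℝ) := by
      exact_mod_cast h
    push_cast [Nat.cast_sub hjL.le] at h'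
    linarith
  have h1 : (L.choose j : ℝ) ≠ 0 :=
    Nat.cast_ne_zero.mpr (Nat.choose_pos hjL.le).ne'
  have h2 : ((j : ℝ) + 1) ≠ 0 := by positivity
  field_simp
  linear_combination (1 - (1 - α j) ^ (j + 1)) * hch
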